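/- Let p and Q be nonzero complex numbers. Then the set of (complex) eigenvalues of the quantum R matrix Ř³ is exactly {1, −p²Q^{−2}, p⁴, pQ^{−1}, −pQ^{−1}, p³Q^{−1}, −p³Q^{−1}, p²Q^{−2}, p²Q²}. -/

import Mathlib

open Matrix

noncomputable section

/-- The elementary matrix `E(a,b;c,d)` on `ℂ⁴ ⊗ ℂ⁴`. -/
def E (a b c d : Fin 4) : Matrix (Fin 4 × Fin 4) (Fin 4 × Fin 4) ℂ :=
  Matrix.single (a, b) (c, d) 1

/-- `M ⊗ I₄`, acting on the first two factors of `ℂ⁴ ⊗ ℂ⁴ ⊗ ℂ⁴`. -/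
def op12 (M : Matrix (Fin 4 × Fin 4) (Fin 4 × Fin 4) ℂ) :
    Matrix (Fin 4 × Fin 4 × Fin 4) (Fin 4 × Fin 4 × Fin 4) ℂ :=
  Matrix.of fun x y => M (x.1, x.2.1) (y.1, y.2.1) * (if x.2.2 = y.2.2 then 1 else 0)

/-- `I₄ ⊗ M`, acting on the last two factors of `ℂ⁴ ⊗ ℂ⁴ ⊗ ℂ⁴`. -/
def op23 (M : Matrix (Fin 4 × Fin 4) (Fin 4 × Fin 4) ℂ) :
    Matrix (Fin 4 × Fin 4 × Fin 4) (Fin 4 × Fin 4 × Fin 4) ℂ :=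
  Matrix.of fun x y => (if x.1 = y.1 then 1 else 0) * M (x.2.1, x.2.2) (y.2.1, y.2.2)

/-- The left quantum partial trace `T(C, M)_{a,b} = Σ_{c,d} C_{d,c} M_{(c,a),(d,b)}`. -/
def ptrace (C : Matrix (Fin 4) (Fin 4) ℂ) (M : Matrix (Fin 4 × Fin 4) (Fin 4 × Fin 4) ℂ) :
    Matrix (Fin 4) (Fin 4) ℂ :=
  Matrix.of fun a b => ∑ c : Fin 4, ∑ d : Fin 4, C d c * M (c, a) (d, b)

/-- The quantum R matrix `Ř³` (Case 3), with complex parameters `p, Q`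
(indices shifted from 1–4 to 0–3). -/
def R3 (p Q : ℂ) : Matrix (Fin 4 × Fin 4) (Fin 4 × Fin 4) ℂ :=
  E 0 0 0 0
  - (p ^ 2 * Q⁻¹ ^ 2) • (E 1 1 1 1 + E 2 2 2 2)
  + (p ^ 4) • E 3 3 3 3
  + (p ^ 2 * (Q ^ 2 - Q⁻¹ ^ 2)) • E 2 1 2 1
  + (p * Q⁻¹) • (E 0 1 1 0 + E 0 2 2 0 + E 1 0 0 1 + E 2 0 0 2)
  + (p ^ 3 * Q⁻¹) • (E 1 3 3 1 + E 2 3 3 2 + E 3 1 1 3 + E 3 2 2 3)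
  + (p ^ 2 * Q⁻¹ ^ 2) • (E 0 3 3 0 + E 3 0 0 3)
  - (p ^ 2) • (E 1 2 2 1 + E 2 1 1 2)

lemma E_mulVec (a b c d : Fin 4) (v : Fin 4 × Fin 4 → ℂ) (x : Fin 4 × Fin 4) :
    (E a b c d).mulVec v x = if x = (a, b) then v (c, d) else 0 := by
  rw [E, Matrix.single_mulVec]
  rcases eq_or_ne x (a, b) with rfl | h
  · simp
  · simp [Function.update, h, Ne.symm h]

lemma R3_mulVec (p Q : ℂ) (v : Fin 4 × Fin 4 → ℂ) (x : Fin 4 × Fin 4) :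
    (R3 p Q).mulVec v x =
      (if x = (0,0) then v (0,0) else 0)
      - (p ^ 2 * Q⁻¹ ^ 2) * ((if x = (1,1) then v (1,1) else 0) + (if x = (2,2) then v (2,2) else 0))
      + (p ^ 4) * (if x = (3,3) then v (3,3) else 0)
      + (p ^ 2 * (Q ^ 2 - Q⁻¹ ^ 2)) * (if x = (2,1) then v (2,1) else 0)
      + (p * Q⁻¹) * ((if x = (0,1) then v (1,0) else 0) + (if x = (0,2) then v (2,0) else 0)
          + (if x = (1,0) then v (0,1) else 0) + (if x = (2,0) then v (0,2) else 0))
      + (p ^ 3 * Q⁻¹) * ((if x = (1,3) then v (3,1) else 0) + (if x = (2,3) then v (3,2) else 0)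
          + (if x = (3,1) then v (1,3) else 0) + (if x = (3,2) then v (2,3) else 0))
      + (p ^ 2 * Q⁻¹ ^ 2) * ((if x = (0,3) then v (3,0) else 0) + (if x = (3,0) then v (0,3) else 0))
      - (p ^ 2) * ((if x = (1,2) then v (2,1) else 0) + (if x = (2,1) then v (1,2) else 0)) := by
  simp only [R3, Matrix.add_mulVec, Matrix.sub_mulVec, Matrix.smul_mulVec,
    Pi.add_apply, Pi.sub_apply, Pi.smul_apply, E_mulVec, smul_eq_mul, mul_add]

lemma lin_zero {a b x : ℂ} (h : (a - b) * x = 0) (h1 : a ≠ b) : x = 0 := by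
  rcases mul_eq_zero.mp h with h' | h'
  · exact absurd (sub_eq_zero.mp h') h1
  · exact h'

lemma lin_zero' {a c x : ℂ} (h : (a + c) * x = 0) (h1 : a ≠ -c) : x = 0 := by
  rcases mul_eq_zero.mp h with h' | h'
  · exact absurd (eq_neg_of_add_eq_zero_left h') h1
  · exact h'

lemma quad_zero {a b c x : ℂ} (h : (a - b) * (a + c) * x = 0) (h1 : a ≠ b) (h2 : a ≠ -c) :
    x = 0 := by
  rcases mul_eq_zero.mp h with h' | h'
  · rcases mul_eq_zero.mp h' with h'' | h''
    · exact absurd (sub_eq_zero.mp h'') h1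
    · exact absurd (eq_neg_of_add_eq_zero_left h'') h2
  · exact h'

set_option maxHeartbeats 1000000 in
/-- The set of eigenvalues of the quantum R matrix `Ř³` is exactly
`{1, −p²Q⁻², p⁴, pQ⁻¹, −pQ⁻¹, p³Q⁻¹, −p³Q⁻¹, p²Q⁻², p²Q²}`. -/
theorem R3_eigenvalues (p Q : ℂ) (hp : p ≠ 0) (hQ : Q ≠ 0) :
    ∀ lam : ℂ,
      (∃ v : Fin 4 × Fin 4 → ℂ, v ≠ 0 ∧ (R3 p Q).mulVec v = lam • v) ↔
        lam ∈ ({1, -(p ^ 2 * Q⁻¹ ^ 2), p ^ 4, p * Q⁻¹, -(p * Q⁻¹),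
                p ^ 3 * Q⁻¹, -(p ^ 3 * Q⁻¹), p ^ 2 * Q⁻¹ ^ 2, p ^ 2 * Q ^ 2} : Set ℂ) := by
  have hq : Q * Q⁻¹ = 1 := mul_inv_cancel₀ hQ
  intro lam
  simp only [Set.mem_insert_iff, Set.mem_singleton_iff]
  constructor
  · rintro ⟨v, hv, hR⟩
    have comp : ∀ x : Fin 4 × Fin 4, (R3 p Q).mulVec v x = lam * v x := by
      intro x; rw [hR]; simp
    have e00 : v (0,0) = lam * v (0,0) := by
      have t := comp (0,0); rw [R3_mulVec] at t; simp [-Prod.mk_zero_zero, -Prod.mk_one_one, -mul_eq_mul_right_iff, -mul_eq_mul_left_iff] at t; linear_combination t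
    have e01 : p * Q⁻¹ * v (1,0) = lam * v (0,1) := by
      have t := comp (0,1); rw [R3_mulVec] at t; simp [-Prod.mk_zero_zero, -Prod.mk_one_one, -mul_eq_mul_right_iff, -mul_eq_mul_left_iff] at t; linear_combination t
    have e02 : p * Q⁻¹ * v (2,0) = lam * v (0,2) := by
      have t := comp (0,2); rw [R3_mulVec] at t; simp [-Prod.mk_zero_zero, -Prod.mk_one_one, -mul_eq_mul_right_iff, -mul_eq_mul_left_iff] at t; linear_combination t
    have e03 : p ^ 2 * Q⁻¹ ^ 2 * v (3,0) = lam * v (0,3) := by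
      have t := comp (0,3); rw [R3_mulVec] at t; simp [-Prod.mk_zero_zero, -Prod.mk_one_one, -mul_eq_mul_right_iff, -mul_eq_mul_left_iff] at t; linear_combination t
    have e10 : p * Q⁻¹ * v (0,1) = lam * v (1,0) := by
      have t := comp (1,0); rw [R3_mulVec] at t; simp [-Prod.mk_zero_zero, -Prod.mk_one_one, -mul_eq_mul_right_iff, -mul_eq_mul_left_iff] at t; linear_combination t
    have e11 : -(p ^ 2 * Q⁻¹ ^ 2) * v (1,1) = lam * v (1,1) := by
      have t := comp (1,1); rw [R3_mulVec] at t; simp [-Prod.mk_zero_zero, -Prod.mk_one_one, -mul_eq_mul_right_iff, -mul_eq_mul_left_iff] at t; linear_combination t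
    have e12 : -(p ^ 2) * v (2,1) = lam * v (1,2) := by
      have t := comp (1,2); rw [R3_mulVec] at t; simp [-Prod.mk_zero_zero, -Prod.mk_one_one, -mul_eq_mul_right_iff, -mul_eq_mul_left_iff] at t; linear_combination t
    have e13 : p ^ 3 * Q⁻¹ * v (3,1) = lam * v (1,3) := by
      have t := comp (1,3); rw [R3_mulVec] at t; simp [-Prod.mk_zero_zero, -Prod.mk_one_one, -mul_eq_mul_right_iff, -mul_eq_mul_left_iff] at t; linear_combination t
    have e20 : p * Q⁻¹ * v (0,2) = lam * v (2,0) := by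
      have t := comp (2,0); rw [R3_mulVec] at t; simp [-Prod.mk_zero_zero, -Prod.mk_one_one, -mul_eq_mul_right_iff, -mul_eq_mul_left_iff] at t; linear_combination t
    have e21 : -(p ^ 2) * v (1,2) + p ^ 2 * (Q ^ 2 - Q⁻¹ ^ 2) * v (2,1) = lam * v (2,1) := by
      have t := comp (2,1); rw [R3_mulVec] at t; simp [-Prod.mk_zero_zero, -Prod.mk_one_one, -mul_eq_mul_right_iff, -mul_eq_mul_left_iff] at t; linear_combination t
    have e22 : -(p ^ 2 * Q⁻¹ ^ 2) * v (2,2) = lam * v (2,2) := by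
      have t := comp (2,2); rw [R3_mulVec] at t; simp [-Prod.mk_zero_zero, -Prod.mk_one_one, -mul_eq_mul_right_iff, -mul_eq_mul_left_iff] at t; linear_combination t
    have e23 : p ^ 3 * Q⁻¹ * v (3,2) = lam * v (2,3) := by
      have t := comp (2,3); rw [R3_mulVec] at t; simp [-Prod.mk_zero_zero, -Prod.mk_one_one, -mul_eq_mul_right_iff, -mul_eq_mul_left_iff] at t; linear_combination t
    have e30 : p ^ 2 * Q⁻¹ ^ 2 * v (0,3) = lam * v (3,0) := by
      have t := comp (3,0); rw [R3_mulVec] at t; simp [-Prod.mk_zero_zero, -Prod.mk_one_one, -mul_eq_mul_right_iff, -mul_eq_mul_left_iff] at t; linear_combination t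
    have e31 : p ^ 3 * Q⁻¹ * v (1,3) = lam * v (3,1) := by
      have t := comp (3,1); rw [R3_mulVec] at t; simp [-Prod.mk_zero_zero, -Prod.mk_one_one, -mul_eq_mul_right_iff, -mul_eq_mul_left_iff] at t; linear_combination t
    have e32 : p ^ 3 * Q⁻¹ * v (2,3) = lam * v (3,2) := by
      have t := comp (3,2); rw [R3_mulVec] at t; simp [-Prod.mk_zero_zero, -Prod.mk_one_one, -mul_eq_mul_right_iff, -mul_eq_mul_left_iff] at t; linear_combination t
    have e33 : p ^ 4 * v (3,3) = lam * v (3,3) := by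
      have t := comp (3,3); rw [R3_mulVec] at t; simp [-Prod.mk_zero_zero, -Prod.mk_one_one, -mul_eq_mul_right_iff, -mul_eq_mul_left_iff] at t; linear_combination t
    by_contra hc
    push_neg at hc
    obtain ⟨h1, h2, h3, h4, h5, h6, h7, h8, h9⟩ := hc
    apply hv
    have z00 : v (0,0) = 0 := lin_zero (by linear_combination -e00) h1
    have z11 : v (1,1) = 0 := lin_zero' (a := lam) (c := p ^ 2 * Q⁻¹ ^ 2)
      (by linear_combination -e11) h2
    have z22 : v (2,2) = 0 := lin_zero' (a := lam) (c := p ^ 2 * Q⁻¹ ^ 2)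
      (by linear_combination -e22) h2
    have z33 : v (3,3) = 0 := lin_zero (by linear_combination -e33) h3
    have z01 : v (0,1) = 0 := quad_zero (a := lam) (b := p * Q⁻¹) (c := p * Q⁻¹)
      (by linear_combination (-lam) * e01 - (p * Q⁻¹) * e10) h4 h5
    have z10 : v (1,0) = 0 := quad_zero (a := lam) (b := p * Q⁻¹) (c := p * Q⁻¹)
      (by linear_combination (-lam) * e10 - (p * Q⁻¹) * e01) h4 h5
    have z02 : v (0,2) = 0 := quad_zero (a := lam) (b := p * Q⁻¹) (c := p * Q⁻¹)
      (by linear_combination (-lam) * e02 - (p * Q⁻¹) * e20) h4 h5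
    have z20 : v (2,0) = 0 := quad_zero (a := lam) (b := p * Q⁻¹) (c := p * Q⁻¹)
      (by linear_combination (-lam) * e20 - (p * Q⁻¹) * e02) h4 h5
    have z13 : v (1,3) = 0 := quad_zero (a := lam) (b := p ^ 3 * Q⁻¹) (c := p ^ 3 * Q⁻¹)
      (by linear_combination (-lam) * e13 - (p ^ 3 * Q⁻¹) * e31) h6 h7
    have z31 : v (3,1) = 0 := quad_zero (a := lam) (b := p ^ 3 * Q⁻¹) (c := p ^ 3 * Q⁻¹)
      (by linear_combination (-lam) * e31 - (p ^ 3 * Q⁻¹) * e13) h6 h7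
    have z23 : v (2,3) = 0 := quad_zero (a := lam) (b := p ^ 3 * Q⁻¹) (c := p ^ 3 * Q⁻¹)
      (by linear_combination (-lam) * e23 - (p ^ 3 * Q⁻¹) * e32) h6 h7
    have z32 : v (3,2) = 0 := quad_zero (a := lam) (b := p ^ 3 * Q⁻¹) (c := p ^ 3 * Q⁻¹)
      (by linear_combination (-lam) * e32 - (p ^ 3 * Q⁻¹) * e23) h6 h7
    have z03 : v (0,3) = 0 := quad_zero (a := lam) (b := p ^ 2 * Q⁻¹ ^ 2) (c := p ^ 2 * Q⁻¹ ^ 2)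
      (by linear_combination (-lam) * e03 - (p ^ 2 * Q⁻¹ ^ 2) * e30) h8 h2
    have z30 : v (3,0) = 0 := quad_zero (a := lam) (b := p ^ 2 * Q⁻¹ ^ 2) (c := p ^ 2 * Q⁻¹ ^ 2)
      (by linear_combination (-lam) * e30 - (p ^ 2 * Q⁻¹ ^ 2) * e03) h8 h2
    have z12 : v (1,2) = 0 := quad_zero (a := lam) (b := p ^ 2 * Q ^ 2) (c := p ^ 2 * Q⁻¹ ^ 2)
      (by linear_combination (p ^ 2 * (Q ^ 2 - Q⁻¹ ^ 2) - lam) * e12 + p ^ 2 * e21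
            - p ^ 4 * (Q * Q⁻¹ + 1) * v (1,2) * hq) h9 h2
    have z21 : v (2,1) = 0 := quad_zero (a := lam) (b := p ^ 2 * Q ^ 2) (c := p ^ 2 * Q⁻¹ ^ 2)
      (by linear_combination p ^ 2 * e12 - lam * e21
            - p ^ 4 * (Q * Q⁻¹ + 1) * v (2,1) * hq) h9 h2
    funext x
    rcases x with ⟨a, b⟩
    fin_cases a <;> fin_cases b <;>
      first
        | exact z00 | exact z01 | exact z02 | exact z03
        | exact z10 | exact z11 | exact z12 | exact z13
        | exact z20 | exact z21 | exact z22 | exact z23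
        | exact z30 | exact z31 | exact z32 | exact z33
  · intro hlam
    rcases hlam with h | h | h | h | h | h | h | h | h
    · exact ⟨fun y => if y = (0,0) then 1 else 0,
        fun hz => by simpa using congrFun hz (0,0),
        by funext x; rw [R3_mulVec]; subst h
           rcases x with ⟨a, b⟩; fin_cases a <;> fin_cases b <;>
             (simp [-Prod.mk_zero_zero, -Prod.mk_one_one]; try ring)⟩
    · exact ⟨fun y => if y = (1,1) then 1 else 0,
        fun hz => by simpa using congrFun hz (1,1),
        by funext x; rw [R3_mulVec]; subst h
           rcases x with ⟨a, b⟩; fin_cases a <;> fin_cases b <;>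
             (simp [-Prod.mk_zero_zero, -Prod.mk_one_one]; try ring)⟩
    · exact ⟨fun y => if y = (3,3) then 1 else 0,
        fun hz => by simpa using congrFun hz (3,3),
        by funext x; rw [R3_mulVec]; subst h
           rcases x with ⟨a, b⟩; fin_cases a <;> fin_cases b <;>
             (simp [-Prod.mk_zero_zero, -Prod.mk_one_one]; try ring)⟩
    · exact ⟨fun y => if y = (0,1) then 1 else if y = (1,0) then 1 else 0,
        fun hz => by simpa using congrFun hz (0,1),
        by funext x; rw [R3_mulVec]; subst h
           rcases x with ⟨a, b⟩; fin_cases a <;> fin_cases b <;>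
             (simp [-Prod.mk_zero_zero, -Prod.mk_one_one]; try ring)⟩
    · exact ⟨fun y => if y = (0,1) then 1 else if y = (1,0) then -1 else 0,
        fun hz => by simpa using congrFun hz (0,1),
        by funext x; rw [R3_mulVec]; subst h
           rcases x with ⟨a, b⟩; fin_cases a <;> fin_cases b <;>
             (simp [-Prod.mk_zero_zero, -Prod.mk_one_one]; try ring)⟩
    · exact ⟨fun y => if y = (1,3) then 1 else if y = (3,1) then 1 else 0,
        fun hz => by simpa using congrFun hz (1,3),
        by funext x; rw [R3_mulVec]; subst h
           rcases x with ⟨a, b⟩; fin_cases a <;> fin_cases b <;>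
             (simp [-Prod.mk_zero_zero, -Prod.mk_one_one]; try ring)⟩
    · exact ⟨fun y => if y = (1,3) then 1 else if y = (3,1) then -1 else 0,
        fun hz => by simpa using congrFun hz (1,3),
        by funext x; rw [R3_mulVec]; subst h
           rcases x with ⟨a, b⟩; fin_cases a <;> fin_cases b <;>
             (simp [-Prod.mk_zero_zero, -Prod.mk_one_one]; try ring)⟩
    · exact ⟨fun y => if y = (0,3) then 1 else if y = (3,0) then 1 else 0,
        fun hz => by simpa using congrFun hz (0,3),
        by funext x; rw [R3_mulVec]; subst h
           rcases x with ⟨a, b⟩; fin_cases a <;> fin_cases b <;>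
             (simp [-Prod.mk_zero_zero, -Prod.mk_one_one]; try ring)⟩
    · exact ⟨fun y => if y = (1,2) then 1 else if y = (2,1) then -Q ^ 2 else 0,
        fun hz => by simpa using congrFun hz (1,2),
        by funext x; rw [R3_mulVec]; subst h
           rcases x with ⟨a, b⟩; fin_cases a <;> fin_cases b <;>
             (simp [-Prod.mk_zero_zero, -Prod.mk_one_one]; try field_simp; try ring)⟩
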